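/- Let A and B be n×n real symmetric positive semidefinite matrices. Then (det A)·(det B) ≤ det(A ∘ B), where A ∘ B is the Hadamard product. -/

import Mathlib

open Matrix
open scoped Matrix

namespace OppenheimAux

lemma symm_entry {m : ℕ} {M : Matrix (Fin m) (Fin m) ℝ} (h : M.IsHermitian) (i j : Fin m) :
    M j i = M i j := by
  conv_lhs => rw [← h]
  simp [conjTranspose_apply]

lemma det_nn {m : ℕ} {M : Matrix (Fin m) (Fin m) ℝ} (hM : M.PosSemidef) : 0 ≤ M.det := by
  rw [hM.1.det_eq_prod_eigenvalues]
  exact Finset.prod_nonneg fun i _ => by simpa using hM.eigenvalues_nonneg i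

lemma diag_nn {m : ℕ} {M : Matrix (Fin m) (Fin m) ℝ} (hM : M.PosSemidef) (i : Fin m) :
    0 ≤ M i i := by
  have := hM.dotProduct_mulVec_nonneg (Pi.single i 1)
  simpa [dotProduct, mulVec, Pi.single_apply, Finset.sum_ite_eq, mul_ite] using this

lemma schur_prod {m : ℕ} {A B : Matrix (Fin m) (Fin m) ℝ} (hA : A.PosSemidef)
    (hB : B.PosSemidef) : (A ⊙ B).PosSemidef := by
  obtain ⟨C, hC⟩ : ∃ C : Matrix (Fin m) (Fin m) ℝ, B = Cᴴ * C := by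
    open scoped MatrixOrder in
    exact ⟨CFC.sqrt B, by rw [(CFC.sqrt_nonneg B).posSemidef.1.eq, CFC.sqrt_mul_sqrt_self B hB.nonneg]⟩
  refine Matrix.PosSemidef.of_dotProduct_mulVec_nonneg ?_ ?_
  · show (A ⊙ B)ᴴ = A ⊙ B
    ext i j
    simp only [conjTranspose_apply, hadamard_apply, star_trivial]
    rw [symm_entry hA.1, symm_entry hB.1]
  · intro x
    have key : dotProduct (star x) ((A ⊙ B) *ᵥ x)
        = ∑ k, dotProduct (fun i => C k i * x i) (A *ᵥ (fun j => C k j * x j)) := by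
      simp only [dotProduct, mulVec, hadamard_apply, hC, Matrix.mul_apply,
        conjTranspose_apply, star_trivial, Finset.mul_sum, Finset.sum_mul]
      conv_rhs => rw [Finset.sum_comm]
      refine Finset.sum_congr rfl fun i _ => ?_
      rw [Finset.sum_comm]
      refine Finset.sum_congr rfl fun j _ => Finset.sum_congr rfl fun k _ => by ring
    rw [key]
    exact Finset.sum_nonneg fun k _ => by simpa using hA.dotProduct_mulVec_nonneg (fun i => C k i * x i)

lemma entry_zero_of_diag_zero {m : ℕ} {M : Matrix (Fin m) (Fin m) ℝ} (hM : M.PosSemidef)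
    {i : Fin m} (h : M i i = 0) (j : Fin m) : M i j = 0 := by
  rcases eq_or_ne i j with rfl | hij
  · exact h
  have key : ∀ t : ℝ, 0 ≤ 2 * t * M i j + M j j := by
    intro t
    have h2 := hM.dotProduct_mulVec_nonneg (t • (Pi.single i 1 : Fin m → ℝ) + (Pi.single j 1 : Fin m → ℝ))
    have hx : ∀ a b : Fin m, dotProduct (Pi.single a (1:ℝ)) (M *ᵥ Pi.single b 1) = M a b := by
      intro a b
      simp [dotProduct, mulVec, Pi.single_apply, Finset.sum_ite_eq, mul_ite]
    simp only [star_trivial, mulVec_add, mulVec_smul, dotProduct_add, add_dotProduct,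
      smul_dotProduct, dotProduct_smul, smul_eq_mul, hx, h, symm_entry hM.1 i j] at h2
    nlinarith [h2]
  by_contra hne
  have h1 := key (-(M j j + 1) / (2 * M i j))
  have h2 : 2 * (-(M j j + 1) / (2 * M i j)) * M i j = -(M j j + 1) := by
    field_simp
  rw [h2] at h1
  linarith

def sumEquiv (n : ℕ) : Unit ⊕ Fin n ≃ Fin (n + 1) where
  toFun := Sum.elim (fun _ => 0) Fin.succ
  invFun := fun i => Fin.cases (Sum.inl ()) Sum.inr i
  left_inv := by rintro (⟨⟩ | i) <;> simp
  right_inv := fun i => by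
    induction i using Fin.cases <;> simp

/-- Schur complement w.r.t. the (0,0) entry. -/
noncomputable def sc {n : ℕ} (M : Matrix (Fin (n + 1)) (Fin (n + 1)) ℝ) :
    Matrix (Fin n) (Fin n) ℝ :=
  Matrix.of fun i j => M i.succ j.succ - M i.succ 0 * M 0 j.succ / M 0 0

/-- Rank-one part w.r.t. the (0,0) entry. -/
noncomputable def rk {n : ℕ} (M : Matrix (Fin (n + 1)) (Fin (n + 1)) ℝ) :
    Matrix (Fin n) (Fin n) ℝ :=
  Matrix.of fun i j => M i.succ 0 * M 0 j.succ / M 0 0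

lemma blk_eq {n : ℕ} (M : Matrix (Fin (n + 1)) (Fin (n + 1)) ℝ) :
    M.submatrix (sumEquiv n) (sumEquiv n)
      = fromBlocks (Matrix.of fun _ _ : Unit => M 0 0)
        (Matrix.of fun (_ : Unit) j => M 0 j.succ)
        (Matrix.of fun i (_ : Unit) => M i.succ 0)
        (Matrix.of fun i j => M i.succ j.succ) := by
  ext i j
  rcases i with i | i <;> rcases j with j | j <;> rfl

lemma det_sc {n : ℕ} {M : Matrix (Fin (n + 1)) (Fin (n + 1)) ℝ} (h0 : M 0 0 ≠ 0) :
    M.det = M 0 0 * (sc M).det := by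
  have h1 : M.det = (M.submatrix (sumEquiv n) (sumEquiv n)).det :=
    (det_submatrix_equiv_self _ _).symm
  rw [h1, blk_eq]
  have hu : IsUnit (Matrix.of fun _ _ : Unit => M 0 0).det := by
    rw [det_unique]
    exact (isUnit_iff_ne_zero).2 h0
  have : Invertible (Matrix.of fun _ _ : Unit => M 0 0) := (Matrix.of _).invertibleOfIsUnitDet hu
  rw [det_fromBlocks₁₁, det_unique, invOf_eq_nonsing_inv]
  congr 1
  congr 1
  ext i j
  rw [inv_subsingleton]
  simp [Matrix.mul_apply, sc, Ring.inverse_eq_inv']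
  ring

lemma sc_posSemidef {n : ℕ} {M : Matrix (Fin (n + 1)) (Fin (n + 1)) ℝ} (hM : M.PosSemidef)
    (h0 : 0 < M 0 0) : (sc M).PosSemidef := by
  have hblk : (M.submatrix (sumEquiv n) (sumEquiv n)).PosSemidef := hM.submatrix _
  rw [blk_eq] at hblk
  have hC : ((Matrix.of fun i (_ : Unit) => M i.succ 0) : Matrix (Fin n) Unit ℝ)
      = ((Matrix.of fun (_ : Unit) j => M 0 j.succ) : Matrix Unit (Fin n) ℝ)ᴴ := by
    ext i j
    simp [conjTranspose_apply, symm_entry hM.1]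
  rw [hC] at hblk
  have hu : IsUnit (Matrix.of fun _ _ : Unit => M 0 0).det := by
    rw [det_unique]; exact (isUnit_iff_ne_zero).2 h0.ne'
  have : Invertible (Matrix.of fun _ _ : Unit => M 0 0) := (Matrix.of _).invertibleOfIsUnitDet hu
  have hPD : (Matrix.of fun _ _ : Unit => M 0 0).PosDef := by
    refine Matrix.PosDef.of_dotProduct_mulVec_pos ?_ ?_
    · ext i j; simp
    · intro x hx
      have hx0 : x () ≠ 0 := fun h => hx (funext fun u => by cases u; exact h)
      have : dotProduct (star x) ((Matrix.of fun _ _ : Unit => M 0 0) *ᵥ x)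
          = M 0 0 * (x () * x ()) := by
        simp [dotProduct, mulVec]
        ring
      rw [this]
      exact mul_pos h0 (mul_self_pos.mpr hx0)
  have hres := (Matrix.PosDef.fromBlocks₁₁ _ _ hPD).mp hblk
  have heq : ((Matrix.of fun i j => M i.succ j.succ)
      - (Matrix.of fun (_ : Unit) j => M 0 j.succ)ᴴ
        * (Matrix.of fun _ _ : Unit => M 0 0)⁻¹
        * (Matrix.of fun (_ : Unit) j => M 0 j.succ)) = sc M := by
    ext i j
    rw [inv_subsingleton]
    simp [Matrix.mul_apply, sc, Ring.inverse_eq_inv', conjTranspose_apply,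
      symm_entry hM.1]
    ring
  rwa [heq] at hres

lemma rk_posSemidef {n : ℕ} {M : Matrix (Fin (n + 1)) (Fin (n + 1)) ℝ} (hM : M.PosSemidef)
    (h0 : 0 < M 0 0) : (rk M).PosSemidef := by
  have hs : ∀ j : Fin n, M 0 j.succ = M j.succ 0 := fun j => symm_entry hM.1 j.succ 0
  refine Matrix.PosSemidef.of_dotProduct_mulVec_nonneg ?_ ?_
  · show (rk M)ᴴ = rk M
    ext i j
    simp only [conjTranspose_apply, rk, Matrix.of_apply, star_trivial, hs]
    ring
  · intro x
    have key : dotProduct (star x) ((rk M) *ᵥ x)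
        = (∑ i, x i * M i.succ 0) * (∑ i, x i * M i.succ 0) / M 0 0 := by
      rw [Finset.sum_mul_sum, Finset.sum_div]
      simp only [dotProduct, mulVec, rk, Matrix.of_apply, star_trivial, hs, Finset.mul_sum]
      refine Finset.sum_congr rfl fun i _ => ?_
      rw [Finset.sum_div]
      refine Finset.sum_congr rfl fun j _ => by ring
    rw [key]
    exact div_nonneg (mul_self_nonneg _) h0.le

lemma one_add_det {m : ℕ} {P : Matrix (Fin m) (Fin m) ℝ} (hP : P.PosSemidef) :
    1 ≤ (1 + P).det := by
  have hH := hP.1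
  set U : Matrix (Fin m) (Fin m) ℝ := (hH.eigenvectorUnitary : Matrix (Fin m) (Fin m) ℝ) with hU
  have hUU : U * star U = 1 := (Matrix.mem_unitaryGroup_iff).mp hH.eigenvectorUnitary.2
  have h1 : (1 : Matrix (Fin m) (Fin m) ℝ) + P
      = U * (1 + diagonal (RCLike.ofReal ∘ hH.eigenvalues)) * star U := by
    rw [mul_add, add_mul, mul_one, hUU]
    conv_lhs => rw [hH.spectral_theorem, Unitary.conjStarAlgAut_apply]
  rw [h1, det_mul_right_comm, hUU, one_mul, ← diagonal_one, diagonal_add, det_diagonal]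
  calc (1:ℝ) = ∏ _i : Fin m, (1:ℝ) := by simp
    _ ≤ ∏ i, (1 + (RCLike.ofReal ∘ hH.eigenvalues) i) := by
        refine Finset.prod_le_prod (fun i _ => zero_le_one) fun i _ => ?_
        have h2 := hP.eigenvalues_nonneg i
        have h3 : ((RCLike.ofReal ∘ hH.eigenvalues) i : ℝ) = hH.eigenvalues i := rfl
        rw [h3]
        linarith

open scoped MatrixOrder in
lemma det_le_det_add_of_posDef {m : ℕ} {M N : Matrix (Fin m) (Fin m) ℝ} (hM : M.PosDef)
    (hN : N.PosSemidef) : M.det ≤ (M + N).det := by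
  set S := CFC.sqrt M with hSdef
  have hS : S.PosSemidef := (CFC.sqrt_nonneg M).posSemidef
  have hSS : S * S = M := CFC.sqrt_mul_sqrt_self M hM.posSemidef.nonneg
  have hdm : 0 < M.det := hM.det_pos
  have hdS : S.det * S.det = M.det := by rw [← det_mul, hSS]
  have hdet : IsUnit S.det := by
    refine isUnit_iff_ne_zero.2 fun h => ?_
    rw [h, mul_zero] at hdS
    exact hdm.ne hdS
  have hSinvH : (S⁻¹)ᴴ = S⁻¹ := by rw [conjTranspose_nonsing_inv, hS.1]
  have hQ : (S⁻¹ * N * S⁻¹).PosSemidef := by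
    have := hN.conjTranspose_mul_mul_same (S⁻¹)
    rwa [hSinvH] at this
  have key : M + N = S * (1 + S⁻¹ * N * S⁻¹) * S := by
    rw [mul_add, mul_one, add_mul, hSS]
    congr 1
    have h3 : S * (S⁻¹ * N * S⁻¹) * S = N := by
      rw [Matrix.mul_assoc S⁻¹, Matrix.mul_nonsing_inv_cancel_left _ _ hdet,
        Matrix.nonsing_inv_mul_cancel_right _ _ hdet]
    exact h3.symm
  rw [key, det_mul, det_mul, mul_right_comm, mul_comm S.det, hdS]
  nlinarith [one_add_det hQ]

lemma det_le_det_add {m : ℕ} {M N : Matrix (Fin m) (Fin m) ℝ} (hM : M.PosSemidef)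
    (hN : N.PosSemidef) : M.det ≤ (M + N).det := by
  set f : ℝ → ℝ := fun ε => (M + ε • 1 + N).det - (M + ε • 1).det with hf
  have hcont : Continuous f := by
    apply Continuous.sub <;>
      exact Continuous.matrix_det (by continuity)
  have hpos : ∀ ε ∈ Set.Ioi (0:ℝ), 0 ≤ f ε := by
    intro ε hε
    have h1 : (ε • (1 : Matrix (Fin m) (Fin m) ℝ)).PosDef := by
      rw [smul_one_eq_diagonal]
      exact posDef_diagonal_iff.2 fun i => hε
    have hPD : (M + ε • 1).PosDef := Matrix.PosDef.posSemidef_add hM h1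
    have := det_le_det_add_of_posDef hPD hN
    simp only [hf]
    linarith
  have hlim : Filter.Tendsto f (nhdsWithin 0 (Set.Ioi 0)) (nhds (f 0)) :=
    (hcont.tendsto 0).mono_left nhdsWithin_le_nhds
  have h0 : 0 ≤ f 0 :=
    ge_of_tendsto hlim (Filter.eventually_of_mem self_mem_nhdsWithin hpos)
  simp only [hf, zero_smul, add_zero] at h0
  linarith

lemma hadamard_ineq : ∀ {m : ℕ} {B : Matrix (Fin m) (Fin m) ℝ}, B.PosSemidef →
    B.det ≤ ∏ i, B i i := by
  intro m
  induction m with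
  | zero => intro B _; simp
  | succ n ih =>
    intro B hB
    rcases (diag_nn hB 0).eq_or_lt with h0 | h0
    · have hrow : ∀ j, B 0 j = 0 := entry_zero_of_diag_zero hB h0.symm
      have hdet : B.det = 0 := det_eq_zero_of_row_eq_zero 0 hrow
      rw [hdet, Fin.prod_univ_succ, ← h0, zero_mul]
    · have hsc := sc_posSemidef hB h0
      have hdd : ∀ i : Fin n, (sc B) i i ≤ B i.succ i.succ := by
        intro i
        have h1 : B 0 i.succ = B i.succ 0 := symm_entry hB.1 i.succ 0
        have h2 : 0 ≤ B i.succ 0 * B 0 i.succ / B 0 0 := by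
          rw [h1]; exact div_nonneg (mul_self_nonneg _) h0.le
        simp only [sc, Matrix.of_apply]
        linarith
      calc B.det = B 0 0 * (sc B).det := det_sc h0.ne'
        _ ≤ B 0 0 * ∏ i, (sc B) i i :=
            mul_le_mul_of_nonneg_left (ih hsc) h0.le
        _ ≤ B 0 0 * ∏ i : Fin n, B i.succ i.succ := by
            refine mul_le_mul_of_nonneg_left ?_ h0.le
            exact Finset.prod_le_prod (fun i _ => diag_nn hsc i) fun i _ => hdd i
        _ = ∏ i, B i i := (Fin.prod_univ_succ (f := fun i => B i i)).symm

lemma oppenheim : ∀ {m : ℕ} {A B : Matrix (Fin m) (Fin m) ℝ}, A.PosSemidef → B.PosSemidef →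
    A.det * ∏ i, B i i ≤ (A ⊙ B).det := by
  intro m
  induction m with
  | zero => intro A B _ _; simp
  | succ n ih =>
    intro A B hA hB
    have hAB := schur_prod hA hB
    rcases (diag_nn hA 0).eq_or_lt with hA0 | hA0
    · have hrow : ∀ j, A 0 j = 0 := entry_zero_of_diag_zero hA hA0.symm
      have hdet : A.det = 0 := det_eq_zero_of_row_eq_zero 0 hrow
      rw [hdet, zero_mul]
      exact det_nn hAB
    rcases (diag_nn hB 0).eq_or_lt with hB0 | hB0
    · rw [Fin.prod_univ_succ, ← hB0, zero_mul, mul_zero]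
      exact det_nn hAB
    have hAB0 : (A ⊙ B) 0 0 = A 0 0 * B 0 0 := rfl
    have hAB0pos : 0 < (A ⊙ B) 0 0 := by rw [hAB0]; exact mul_pos hA0 hB0
    have hsplit : sc (A ⊙ B) = (sc A ⊙ B.submatrix Fin.succ Fin.succ) + (rk A ⊙ sc B) := by
      ext i j
      simp only [sc, rk, Matrix.of_apply, hadamard_apply, Matrix.add_apply, submatrix_apply,
        hAB0]
      field_simp
      ring
    have h1 : (sc A ⊙ B.submatrix Fin.succ Fin.succ).PosSemidef :=
      schur_prod (sc_posSemidef hA hA0) (hB.submatrix Fin.succ)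
    have h2 : (rk A ⊙ sc B).PosSemidef :=
      schur_prod (rk_posSemidef hA hA0) (sc_posSemidef hB hB0)
    have hmono : (sc A ⊙ B.submatrix Fin.succ Fin.succ).det ≤ (sc (A ⊙ B)).det := by
      rw [hsplit]
      exact det_le_det_add h1 h2
    have hih := ih (sc_posSemidef hA hA0) (hB.submatrix Fin.succ)
    calc A.det * ∏ i, B i i
        = (A 0 0 * (sc A).det) * (B 0 0 * ∏ i : Fin n, B i.succ i.succ) := by
          rw [← det_sc hA0.ne', ← Fin.prod_univ_succ (f := fun i => B i i)]
      _ = (A 0 0 * B 0 0) * ((sc A).det * ∏ i, (B.submatrix Fin.succ Fin.succ) i i) := by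
          simp only [submatrix_apply]
          ring
      _ ≤ (A 0 0 * B 0 0) * (sc A ⊙ B.submatrix Fin.succ Fin.succ).det :=
          mul_le_mul_of_nonneg_left hih (mul_pos hA0 hB0).le
      _ ≤ (A 0 0 * B 0 0) * (sc (A ⊙ B)).det :=
          mul_le_mul_of_nonneg_left hmono (mul_pos hA0 hB0).le
      _ = (A ⊙ B).det := by
          rw [← hAB0, ← det_sc hAB0pos.ne']

end OppenheimAux

/-- Oppenheim-type inequality: for `n × n` real symmetric positive semidefinite
matrices `A` and `B`, `(det A)·(det B) ≤ det (A ∘ B)` for the Hadamard product. -/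
theorem det_mul_det_le_det_hadamard (n : ℕ) (A B : Matrix (Fin n) (Fin n) ℝ)
    (hA : A.PosSemidef) (hB : B.PosSemidef) :
    A.det * B.det ≤ (A ⊙ B).det := by
  calc A.det * B.det ≤ A.det * ∏ i, B i i :=
        mul_le_mul_of_nonneg_left (OppenheimAux.hadamard_ineq hB) (OppenheimAux.det_nn hA)
    _ ≤ (A ⊙ B).det := OppenheimAux.oppenheim hA hB
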